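/- If d is the distance matrix of a strict negative type metric on [N] with N ≥ 2, then 1^T d^{-1} 1 > 0, i.e., the sum of all entries of the inverse distance matrix is strictly positive. -/

import Mathlib

open Matrix BigOperators

/-- If `d` is the distance matrix of a strict negative type metric on `[N]` with `N ≥ 2`,
then `1ᵀ d⁻¹ 1 > 0`. -/
theorem stmt1 {N : ℕ} (hN : 2 ≤ N) (d : Matrix (Fin N) (Fin N) ℝ)
    (hsymm : d.IsSymm) (hdiag : ∀ i, d i i = 0)
    (hpos : ∀ i j, i ≠ j → 0 < d i j)
    (htri : ∀ i j k, d i k ≤ d i j + d j k)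
    (hSNT : ∀ x : Fin N → ℝ, x ≠ 0 → ∑ i, x i = 0 → x ⬝ᵥ d.mulVec x < 0) :
    0 < (1 : Fin N → ℝ) ⬝ᵥ d⁻¹.mulVec (1 : Fin N → ℝ) := by
  set i0 : Fin N := ⟨0, by omega⟩
  set i1 : Fin N := ⟨1, by omega⟩
  have hne : i0 ≠ i1 := by simp [i0, i1, Fin.ext_iff]
  -- symmetry of the bilinear form
  have hsym : ∀ x y : Fin N → ℝ, x ⬝ᵥ d.mulVec y = y ⬝ᵥ d.mulVec x := by
    intro x y
    rw [Matrix.dotProduct_mulVec]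
    nth_rewrite 1 [← hsymm.eq]
    rw [Matrix.vecMul_transpose, dotProduct_comm]
  set v : Fin N → ℝ := Pi.single i0 1 + Pi.single i1 1 with hv
  have hsumv : ∑ i, v i = 2 := by
    simp [hv, Finset.sum_add_distrib]
    norm_num
  have hvdv : v ⬝ᵥ d.mulVec v = 2 * d i0 i1 := by
    have h10 : d i1 i0 = d i0 i1 := by
      conv_lhs => rw [← hsymm.eq]
      rfl
    simp [hv, add_dotProduct, Matrix.mulVec_add, dotProduct_add,
      single_dotProduct, Matrix.mulVec_single, hdiag, h10]
    ring
  have hvdvpos : 0 < v ⬝ᵥ d.mulVec v := by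
    rw [hvdv]; linarith [hpos i0 i1 hne]
  -- invertibility
  have hdet : IsUnit d.det := by
    rw [isUnit_iff_ne_zero]
    intro hdet0
    obtain ⟨x, hx0, hxd⟩ := (Matrix.exists_mulVec_eq_zero_iff).2 hdet0
    set s := ∑ i, x i with hs
    rcases eq_or_ne s 0 with hs0 | hs0
    · have := hSNT x hx0 (by rw [← hs, hs0])
      rw [hxd, dotProduct_zero] at this
      exact lt_irrefl 0 this
    · set z : Fin N → ℝ := v - (2 / s) • x with hz
      have hsumz : ∑ i, z i = 0 := by
        simp [hz, Finset.sum_sub_distrib, ← Finset.mul_sum, hsumv, ← hs]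
        field_simp
        norm_num
      have hzdz : z ⬝ᵥ d.mulVec z = v ⬝ᵥ d.mulVec v := by
        have hx_v : x ⬝ᵥ d.mulVec v = 0 := by
          rw [hsym, hxd, dotProduct_zero]
        simp [hz, Matrix.mulVec_sub, Matrix.mulVec_smul, hxd, sub_dotProduct,
          dotProduct_sub, smul_dotProduct, hx_v]
      have hle : z ⬝ᵥ d.mulVec z ≤ 0 := by
        rcases eq_or_ne z 0 with h0 | h0
        · simp [h0]
        · exact le_of_lt (hSNT z h0 hsumz)
      rw [hzdz] at hle
      linarith
  -- the inverse vector
  set y : Fin N → ℝ := d⁻¹.mulVec 1 with hy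
  have hdy : d.mulVec y = 1 := by
    rw [hy, Matrix.mulVec_mulVec, Matrix.mul_nonsing_inv d hdet, Matrix.one_mulVec]
  have hgoal : (1 : Fin N → ℝ) ⬝ᵥ d⁻¹.mulVec 1 = ∑ i, y i := by
    simp [hy, dotProduct, one_dotProduct]
  rw [hgoal]
  set s := ∑ i, y i with hs
  have hydy : y ⬝ᵥ d.mulVec y = s := by
    rw [hdy]
    simp [dotProduct_one, hs]
  have hy0 : y ≠ 0 := by
    intro h0
    rw [h0, Matrix.mulVec_zero] at hdy
    have := congrFun hdy i0
    simp at this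
  rcases lt_trichotomy s 0 with hsneg | hs0 | hspos
  · -- s < 0 : contradiction via z = v - (2/s) • y
    exfalso
    set z : Fin N → ℝ := v - (2 / s) • y with hz
    have hsne : s ≠ 0 := ne_of_lt hsneg
    have hsumz : ∑ i, z i = 0 := by
      simp [hz, Finset.sum_sub_distrib, ← Finset.mul_sum, hsumv, ← hs]
      field_simp
      norm_num
    have hv_y : v ⬝ᵥ d.mulVec y = 2 := by
      rw [hdy, dotProduct_one, hsumv]
    have hy_v : y ⬝ᵥ d.mulVec v = 2 := by rw [hsym]; exact hv_y
    have hzdz : z ⬝ᵥ d.mulVec z = v ⬝ᵥ d.mulVec v - 4 / s := by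
      simp [hz, Matrix.mulVec_sub, Matrix.mulVec_smul, sub_dotProduct,
        dotProduct_sub, smul_dotProduct, dotProduct_smul,
        hv_y, hy_v, hydy]
      field_simp
      ring
    have hzpos : 0 < z ⬝ᵥ d.mulVec z := by
      rw [hzdz]
      have : 4 / s < 0 := div_neg_of_pos_of_neg (by norm_num) hsneg
      linarith
    have hle : z ⬝ᵥ d.mulVec z ≤ 0 := by
      rcases eq_or_ne z 0 with h0 | h0
      · simp [h0]
      · exact le_of_lt (hSNT z h0 hsumz)
    linarith
  · -- s = 0 : contradiction via hSNT y
    exfalso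
    have := hSNT y hy0 (by rw [← hs, hs0])
    rw [hydy, hs0] at this
    exact lt_irrefl 0 this
  · exact hspos
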